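/- For every real t with 0 ≤ t < 3/(4+√6) and all real B > 0, α > 0, E > 0, there exists ν ≥ 0, depending only on t, B, α and E, such that the following holds: for every ε ∈ (0, 0.9), every integer d ≥ 1, every real Hilbert space H with an orthonormal family (ψ_i)_{i ∈ ℕᵈ}, and every square-summable family (c_i)_{i ∈ ℕᵈ} with |c_i| ≤ B·exp(−α·∑_{k=1}^d k²·i_k) for all i and u := ∑_i c_i ψ_i (converging in H) satisfying ‖u‖² ≥ E, there exists a real M ≥ 0 such that 𝔅_ε := {i ∈ ℕᵈ : ∑_k k²·i_k ≤ M} is finite with cardinality at most ε^{−ν}, and moreover: for every finite set 𝔅 of multi-indices with 𝔅_ε ⊆ 𝔅, writing c̃ ∈ ℝ^{𝔅} for the restriction of (c_i) to 𝔅 and ũ := ∑_{i∈𝔅} c_i ψ_i, for every real N×|𝔅| matrix D with ‖DᵀD − I‖ ≤ t in the ℓ²-operator norm, every y ∈ ℝᴺ and η ≥ 0 with ‖Dc̃ − y‖₂ ≤ η and η ≤ ‖u − ũ‖, and every Basis Pursuit Denoising solution ĉ at level η, the surrogate û := ∑_{i∈𝔅} ĉ_i ψ_i satisfies ‖u − û‖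 ≤ ε·‖u‖. -/

import Mathlib

open Matrix

/-- The weighted total order `S(i) = ∑_{k=1}^d k²·i_k` of a multi-index `i ∈ ℕᵈ`
(with `k` ranging over `1,…,d`). -/
def weightedOrder {d : ℕ} (i : Fin d → ℕ) : ℕ := ∑ k : Fin d, ((k : ℕ) + 1) ^ 2 * i k

/-- The ℓ¹-norm of a finitely supported real vector. -/
noncomputable def l1norm {ι : Type*} [Fintype ι] (x : ι → ℝ) : ℝ := ∑ i, |x i|

/-- The ℓ²-norm of a finitely supported real vector. -/
noncomputable def l2norm {ι : Type*} [Fintype ι] (x : ι → ℝ) : ℝ := Real.sqrt (∑ i, (x i) ^ 2)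

/-- `chat` is a Basis Pursuit Denoising solution at noise level `η`. -/
def IsBPDNSolution {ι κ : Type*} [Fintype ι] [Fintype κ]
    (D : Matrix ι κ ℝ) (y : ι → ℝ) (η : ℝ) (chat : κ → ℝ) : Prop :=
  l2norm (D.mulVec chat - y) ≤ η ∧
    ∀ c : κ → ℝ, l2norm (D.mulVec c - y) ≤ η → l1norm chat ≤ l1norm c

/-- The ℓ²-operator (spectral) norm of a square real matrix. -/
noncomputable def opNorm {ι : Type*} [Fintype ι] [DecidableEq ι] (A : Matrix ι ι ℝ) : ℝ :=
  ‖LinearMap.toContinuousLinearMap (Matrix.toEuclideanLin A)‖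

/-! ### Auxiliary lemmas -/

lemma geo_le {x : ℝ} (h0 : 0 ≤ x) (h1 : x < 1) (N : ℕ) :
    ∑ n ∈ Finset.range N, x ^ n ≤ (1 - x)⁻¹ := by
  have hx : (0:ℝ) < 1 - x := by linarith
  have h2 := geom_sum_mul x N
  have hp : (0:ℝ) ≤ x ^ N := pow_nonneg h0 N
  rw [inv_eq_one_div, le_div_iff₀ hx]
  nlinarith

lemma box_sum_le {d : ℕ} {α : ℝ} (hα : 0 < α) (s : Finset (Fin d → ℕ)) :
    ∑ i ∈ s, Real.exp (-α * (weightedOrder i : ℝ)) ≤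
      Real.exp (Real.exp (-α) / (1 - Real.exp (-α)) ^ 2) := by
  classical
  set q := Real.exp (-α) with hq
  have hq0 : 0 < q := Real.exp_pos _
  have hq1 : q < 1 := Real.exp_lt_one_iff.2 (by linarith)
  set r : Fin d → ℝ := fun k => Real.exp (-α * ((k : ℕ) + 1) ^ 2) with hr
  have hr0 : ∀ k, 0 < r k := fun k => Real.exp_pos _
  have hrq : ∀ k, r k ≤ q ^ ((k : ℕ) + 1) := by
    intro k
    rw [hr, hq, ← Real.exp_nat_mul]
    apply Real.exp_le_exp.2
    have h1 : ((k:ℕ) + 1 : ℝ) ≤ ((k:ℕ) + 1) ^ 2 := by nlinarith [Nat.cast_nonneg (k : ℕ) (α := ℝ)]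
    push_cast
    nlinarith
  have hrq1 : ∀ k, r k ≤ q := fun k => (hrq k).trans (by
    calc q ^ ((k:ℕ)+1) ≤ q ^ 1 := pow_le_pow_of_le_one hq0.le hq1.le (by omega)
    _ = q := pow_one q)
  set m := s.sup (fun i => Finset.univ.sup i) with hm
  have hsub : s ⊆ Fintype.piFinset (fun _ : Fin d => Finset.range (m + 1)) := by
    intro i hi
    rw [Fintype.mem_piFinset]
    intro k
    rw [Finset.mem_range]
    have : i k ≤ m := le_trans (Finset.le_sup (Finset.mem_univ k)) (Finset.le_sup hi)
    omega
  have hterm : ∀ i : Fin d → ℕ, Real.exp (-α * (weightedOrder i : ℝ)) = ∏ k, (r k) ^ (i k) := by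
    intro i
    rw [weightedOrder]
    push_cast
    rw [Finset.mul_sum, Real.exp_sum]
    refine Finset.prod_congr rfl fun k _ => ?_
    rw [hr, ← Real.exp_nat_mul]
    ring_nf
  calc ∑ i ∈ s, Real.exp (-α * (weightedOrder i : ℝ))
      ≤ ∑ i ∈ Fintype.piFinset (fun _ : Fin d => Finset.range (m + 1)),
          Real.exp (-α * (weightedOrder i : ℝ)) :=
        Finset.sum_le_sum_of_subset_of_nonneg hsub (fun i _ _ => (Real.exp_pos _).le)
    _ = ∏ k : Fin d, ∑ n ∈ Finset.range (m + 1), (r k) ^ n := by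
        rw [Finset.prod_univ_sum]
        exact Finset.sum_congr rfl fun i _ => hterm i
    _ ≤ ∏ k : Fin d, Real.exp (r k / (1 - q)) := by
        apply Finset.prod_le_prod
        · intro k _
          exact Finset.sum_nonneg fun n _ => pow_nonneg (hr0 k).le n
        · intro k _
          have h1 : (1 : ℝ) - q ≤ 1 - r k := by linarith [hrq1 k]
          have h2 : (0:ℝ) < 1 - q := by linarith
          have h3 : (0:ℝ) < 1 - r k := by linarith
          calc ∑ n ∈ Finset.range (m+1), (r k) ^ n ≤ (1 - r k)⁻¹ :=
                geo_le (hr0 k).le (lt_of_le_of_lt (hrq1 k) hq1) _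
            _ = 1 + r k / (1 - r k) := by field_simp; ring
            _ ≤ 1 + r k / (1 - q) := by gcongr
            _ ≤ Real.exp (r k / (1 - q)) := by
                linarith [Real.add_one_le_exp (r k / (1 - q))]
    _ = Real.exp (∑ k : Fin d, r k / (1 - q)) := (Real.exp_sum _ _).symm
    _ ≤ Real.exp (q / (1 - q) ^ 2) := by
        apply Real.exp_le_exp.2
        have h2 : (0:ℝ) < 1 - q := by linarith
        rw [← Finset.sum_div, div_le_div_iff₀ h2 (by positivity)]
        have hsum : ∑ k : Fin d, r k ≤ q / (1 - q) := by
          calc ∑ k : Fin d, r k ≤ ∑ k : Fin d, q ^ ((k:ℕ) + 1) := Finset.sum_le_sum fun k _ => hrq k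
            _ = q * ∑ k : Fin d, q ^ (k:ℕ) := by
                rw [Finset.mul_sum]; exact Finset.sum_congr rfl fun k _ => by ring
            _ = q * ∑ n ∈ Finset.range d, q ^ n := by rw [Fin.sum_univ_eq_sum_range (fun n => q ^ n)]
            _ ≤ q * (1 - q)⁻¹ := by
                have := geo_le hq0.le hq1 d
                exact mul_le_mul_of_nonneg_left this hq0.le
            _ = q / (1 - q) := by rw [div_eq_mul_inv]
        calc (∑ k : Fin d, r k) * (1-q)^2 ≤ (q / (1-q)) * (1-q)^2 := by
              apply mul_le_mul_of_nonneg_right hsum (by positivity)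
          _ = q * (1 - q) := by
              rw [sq]
              field_simp

lemma l2norm_eq_norm {ι : Type*} [Fintype ι] (x : ι → ℝ) :
    l2norm x = ‖(WithLp.equiv 2 (ι → ℝ)).symm x‖ := by
  rw [l2norm, EuclideanSpace.norm_eq]
  congr 1
  exact Finset.sum_congr rfl fun i _ => by
    rw [Real.norm_eq_abs, sq_abs]; rfl

lemma l2norm_nonneg {ι : Type*} [Fintype ι] (x : ι → ℝ) : 0 ≤ l2norm x :=
  Real.sqrt_nonneg _

lemma l2norm_sq {ι : Type*} [Fintype ι] (x : ι → ℝ) : (l2norm x) ^ 2 = ∑ i, (x i) ^ 2 :=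
  Real.sq_sqrt (Finset.sum_nonneg fun i _ => sq_nonneg _)

lemma l2norm_sub_le {ι : Type*} [Fintype ι] (x y : ι → ℝ) :
    l2norm (x - y) ≤ l2norm x + l2norm y := by
  simp only [l2norm_eq_norm]
  rw [show (WithLp.equiv 2 (ι → ℝ)).symm (x - y)
      = (WithLp.equiv 2 (ι → ℝ)).symm x - (WithLp.equiv 2 (ι → ℝ)).symm y from rfl]
  exact norm_sub_le _ _

lemma l2norm_mulVec_le {ι : Type*} [Fintype ι] [DecidableEq ι] (A : Matrix ι ι ℝ) (x : ι → ℝ) :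
    l2norm (A.mulVec x) ≤ opNorm A * l2norm x := by
  rw [l2norm_eq_norm, l2norm_eq_norm]
  change ‖(Matrix.toEuclideanLin A) ((WithLp.equiv 2 (ι → ℝ)).symm x)‖ ≤ _
  exact (LinearMap.toContinuousLinearMap (Matrix.toEuclideanLin A)).le_opNorm _

lemma dot_abs_le {ι : Type*} [Fintype ι] (x y : ι → ℝ) :
    |x ⬝ᵥ y| ≤ l2norm x * l2norm y := by
  have h := Finset.sum_mul_sq_le_sq_mul_sq Finset.univ x y
  have h2 : (x ⬝ᵥ y) ^ 2 ≤ (l2norm x * l2norm y) ^ 2 := by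
    rw [mul_pow, l2norm_sq, l2norm_sq]
    exact h
  calc |x ⬝ᵥ y| = Real.sqrt ((x ⬝ᵥ y) ^ 2) := (Real.sqrt_sq_eq_abs _).symm
    _ ≤ Real.sqrt ((l2norm x * l2norm y) ^ 2) := Real.sqrt_le_sqrt h2
    _ = l2norm x * l2norm y :=
        Real.sqrt_sq (mul_nonneg (l2norm_nonneg x) (l2norm_nonneg y))

lemma le_of_sq_le_sq' {a b : ℝ} (ha : 0 ≤ a) (hb : 0 ≤ b) (h : a ^ 2 ≤ b ^ 2) : a ≤ b := by
  nlinarith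

lemma mulVec_sq_lower {N : ℕ} {κ : Type*} [Fintype κ] [DecidableEq κ]
    (D : Matrix (Fin N) κ ℝ) {t : ℝ} (ht : opNorm (Dᵀ * D - 1) ≤ t) (v : κ → ℝ) :
    (1 - t) * (l2norm v) ^ 2 ≤ (l2norm (D.mulVec v)) ^ 2 := by
  set w := (Dᵀ * D - 1).mulVec v with hw
  have hwle : l2norm w ≤ t * l2norm v := by
    calc l2norm w ≤ opNorm (Dᵀ * D - 1) * l2norm v := l2norm_mulVec_le _ _
      _ ≤ t * l2norm v := mul_le_mul_of_nonneg_right ht (l2norm_nonneg v)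
  have hid : (l2norm (D.mulVec v)) ^ 2 = v ⬝ᵥ v + v ⬝ᵥ w := by
    rw [l2norm_sq]
    have h1 : ∑ j, (D.mulVec v j) ^ 2 = (D.mulVec v) ⬝ᵥ (D.mulVec v) := by
      rw [dotProduct]
      exact Finset.sum_congr rfl fun j _ => (sq _)
    have h2 : (D.mulVec v) ⬝ᵥ (D.mulVec v) = v ⬝ᵥ ((Dᵀ * D).mulVec v) := by
      rw [← Matrix.mulVec_mulVec, Matrix.mulVec_transpose, dotProduct_comm,
        Matrix.dotProduct_mulVec]
      exact dotProduct_comm _ _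
    have h3 : (Dᵀ * D).mulVec v = v + w := by
      rw [hw, Matrix.sub_mulVec, Matrix.one_mulVec]
      abel
    rw [h1, h2, h3, dotProduct_add]
  have hvv : v ⬝ᵥ v = (l2norm v) ^ 2 := by
    rw [l2norm_sq, dotProduct]
    exact Finset.sum_congr rfl fun j _ => (sq _).symm
  have habs : |v ⬝ᵥ w| ≤ l2norm v * (t * l2norm v) :=
    (dot_abs_le v w).trans (mul_le_mul_of_nonneg_left hwle (l2norm_nonneg v))
  have := abs_le.1 habs
  nlinarith [l2norm_nonneg v]

lemma ortho_norm_sq {H : Type} [NormedAddCommGroup H] [InnerProductSpace ℝ H]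
    {ι : Type*} {v : ι → H} (hv : Orthonormal ℝ v) (l : ι → ℝ) (s : Finset ι) :
    ‖∑ i ∈ s, l i • v i‖ ^ 2 = ∑ i ∈ s, (l i) ^ 2 := by
  rw [← real_inner_self_eq_norm_sq, hv.inner_sum]
  simp [sq]

set_option maxHeartbeats 1000000 in
/-- Corollary 4.9 (dimension-independent recovery), deterministic content: for exponentially
decaying polynomial chaos coefficients there is an anisotropic order basis `𝔅_ε` with at most
`ε^{−ν}` elements (with `ν` independent of the dimension `d`) such that for any basis
`𝔅 ⊇ 𝔅_ε` and any design matrix satisfying the isometry bound `‖DᵀD − I‖ ≤ t`, the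
Basis Pursuit Denoising surrogate attains relative error at most `ε`. -/
theorem dimension_independent_recovery :
    ∀ t : ℝ, 0 ≤ t → t < 3 / (4 + Real.sqrt 6) →
    ∀ B α E : ℝ, 0 < B → 0 < α → 0 < E →
    ∃ ν : ℝ, 0 ≤ ν ∧
      ∀ ε : ℝ, 0 < ε → ε < 0.9 →
      ∀ d : ℕ, 1 ≤ d →
      ∀ (H : Type) [NormedAddCommGroup H] [InnerProductSpace ℝ H],
      ∀ ψ : (Fin d → ℕ) → H, Orthonormal ℝ ψ →
      ∀ c : (Fin d → ℕ) → ℝ, Summable (fun i => (c i) ^ 2) →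
      (∀ i : Fin d → ℕ, |c i| ≤ B * Real.exp (-α * (weightedOrder i : ℝ))) →
      ∀ u : H, HasSum (fun i => c i • ψ i) u → E ≤ ‖u‖ ^ 2 →
      ∃ M : ℝ, 0 ≤ M ∧
        ∃ hfin : {i : Fin d → ℕ | (weightedOrder i : ℝ) ≤ M}.Finite,
          (hfin.toFinset.card : ℝ) ≤ ε ^ (-ν) ∧
            ∀ 𝔅 : Finset (Fin d → ℕ), hfin.toFinset ⊆ 𝔅 →
            ∀ (N : ℕ) (D : Matrix (Fin N) {i // i ∈ 𝔅} ℝ),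
              opNorm (Dᵀ * D - 1) ≤ t →
            ∀ (y : Fin N → ℝ) (η : ℝ), 0 ≤ η →
              l2norm (D.mulVec (fun i : {i // i ∈ 𝔅} => c i.1) - y) ≤ η →
              η ≤ ‖u - ∑ i ∈ 𝔅, c i • ψ i‖ →
            ∀ chat : {i // i ∈ 𝔅} → ℝ, IsBPDNSolution D y η chat →
              ‖u - ∑ i : {i // i ∈ 𝔅}, chat i • ψ i.1‖ ≤ ε * ‖u‖ := by
  intro t ht0 ht1 B α E hB hα hE
  classical
  have hsqrt6 : (0:ℝ) ≤ Real.sqrt 6 := Real.sqrt_nonneg 6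
  have htlt1 : t < 1 := by
    refine lt_of_lt_of_le ht1 ?_
    rw [div_le_one (by linarith)]
    linarith
  set κ0 := Real.sqrt (1 - t) with hκ0
  have hκ0pos : 0 < κ0 := Real.sqrt_pos.2 (by linarith)
  have hκ0sq : κ0 ^ 2 = 1 - t := Real.sq_sqrt (by linarith)
  set C := 1 + 2 / κ0 with hC
  have hCpos : 0 < C := by positivity
  set q := Real.exp (-α) with hqdef
  set P := Real.exp (q / (1 - q) ^ 2) with hPdef
  have hq0 : 0 < q := Real.exp_pos _
  have hq1 : q < 1 := Real.exp_lt_one_iff.2 (by linarith)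
  have hPpos : 0 < P := Real.exp_pos _
  have hP1 : (1:ℝ) ≤ P := Real.one_le_exp (by positivity)
  set A := max 0 ((1/α) * Real.log (C^2 * B^2 * P / E)) with hAdef
  have hA0 : 0 ≤ A := le_max_left _ _
  set L := -Real.log 0.9 with hLdef
  have hLpos : 0 < L := by
    rw [hLdef, neg_pos]
    exact Real.log_neg (by norm_num) (by norm_num)
  have hlogP : 0 ≤ Real.log P := Real.log_nonneg hP1
  refine ⟨2 + (α * A + Real.log P) / L, by positivity, ?_⟩
  intro ε hε0 hε9 d hd H _ _ ψ hψ c hc hcb u hu hEu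
  have hε1 : ε < 1 := by linarith
  have hlogε : Real.log ε < 0 := Real.log_neg hε0 hε1
  set M := A + (2/α) * (-Real.log ε) with hMdef
  have hM0 : 0 ≤ M := by
    have h0 : 0 ≤ (2/α) * (-Real.log ε) := mul_nonneg (by positivity) (by linarith)
    exact add_nonneg hA0 h0
  -- finiteness
  have hcoord : ∀ i : Fin d → ℕ, (weightedOrder i : ℝ) ≤ M → ∀ k, i k ≤ ⌊M⌋₊ := by
    intro i hi k
    have h1 : i k ≤ weightedOrder i := by
      have h2 : i k ≤ ((k:ℕ)+1)^2 * i k := by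
        have hpos : 0 < ((k:ℕ)+1)^2 := by positivity
        calc i k = 1 * i k := (one_mul _).symm
          _ ≤ ((k:ℕ)+1)^2 * i k := Nat.mul_le_mul_right _ hpos
      have h3 : ((k:ℕ)+1)^2 * i k ≤ weightedOrder i :=
        Finset.single_le_sum (f := fun k : Fin d => ((k:ℕ)+1)^2 * i k)
          (fun _ _ => Nat.zero_le _) (Finset.mem_univ k)
      omega
    refine Nat.le_floor ?_
    calc (i k : ℝ) ≤ (weightedOrder i : ℝ) := by exact_mod_cast h1
      _ ≤ M := hi
  have hfin : {i : Fin d → ℕ | (weightedOrder i : ℝ) ≤ M}.Finite := by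
    apply Set.Finite.subset
      (Finset.finite_toSet (Fintype.piFinset (fun _ : Fin d => Finset.range (⌊M⌋₊ + 1))))
    intro i hi
    simp only [Finset.coe_sort_coe, Finset.mem_coe, Fintype.mem_piFinset, Finset.mem_range]
    intro k
    exact Nat.lt_succ_of_le (hcoord i hi k)
  refine ⟨M, hM0, hfin, ?_, ?_⟩
  · -- cardinality bound
    have hcard : (hfin.toFinset.card : ℝ) ≤ Real.exp (α * M) * P := by
      calc (hfin.toFinset.card : ℝ) = ∑ _i ∈ hfin.toFinset, (1:ℝ) := by
            rw [Finset.sum_const, nsmul_eq_mul, mul_one]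
        _ ≤ ∑ i ∈ hfin.toFinset, Real.exp (α * M) * Real.exp (-α * (weightedOrder i : ℝ)) := by
            apply Finset.sum_le_sum
            intro i hi
            rw [← Real.exp_add]
            apply Real.one_le_exp
            have hSM : (weightedOrder i : ℝ) ≤ M := (hfin.mem_toFinset.1 hi)
            nlinarith
        _ = Real.exp (α * M) * ∑ i ∈ hfin.toFinset, Real.exp (-α * (weightedOrder i : ℝ)) := by
            rw [Finset.mul_sum]
        _ ≤ Real.exp (α * M) * P :=
            mul_le_mul_of_nonneg_left (box_sum_le hα _) (Real.exp_pos _).le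
    have hexpM : Real.exp (α * M) = Real.exp (α * A) * Real.exp (2 * (-Real.log ε)) := by
      rw [← Real.exp_add]
      congr 1
      rw [hMdef]
      field_simp
    have hrpow : Real.exp (α * A) * Real.exp (2 * (-Real.log ε)) * P
        ≤ ε ^ (-(2 + (α * A + Real.log P) / L)) := by
      have hs0 : 0 ≤ (α * A + Real.log P) / L := by positivity
      rw [show -(2 + (α * A + Real.log P) / L) = (-2) + (-((α * A + Real.log P) / L)) by ring,
        Real.rpow_add hε0]
      have h1 : ε ^ ((-2 : ℝ)) = Real.exp (2 * (-Real.log ε)) := by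
        rw [Real.rpow_def_of_pos hε0]
        congr 1
        ring
      have h2 : Real.exp (α * A) * P ≤ ε ^ (-((α * A + Real.log P) / L)) := by
        rw [Real.rpow_def_of_pos hε0]
        have hePP : Real.exp (α * A) * P = Real.exp (α * A + Real.log P) := by
          rw [Real.exp_add, Real.exp_log hPpos]
        rw [hePP]
        apply Real.exp_le_exp.2
        have hεL : L ≤ -Real.log ε := by
          rw [hLdef]
          have : Real.log ε ≤ Real.log 0.9 := Real.log_le_log hε0 hε9.le
          linarith
        have hsL : (α * A + Real.log P) / L * L = α * A + Real.log P := by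
          field_simp
        have h4 := mul_le_mul_of_nonneg_left hεL hs0
        have h5 : Real.log ε * -((α * A + Real.log P) / L)
            = (α * A + Real.log P) / L * (-Real.log ε) := by ring
        rw [h5]
        linarith
      calc Real.exp (α * A) * Real.exp (2 * (-Real.log ε)) * P
          = Real.exp (2 * (-Real.log ε)) * (Real.exp (α * A) * P) := by ring
        _ ≤ Real.exp (2 * (-Real.log ε)) * ε ^ (-((α * A + Real.log P) / L)) :=
            mul_le_mul_of_nonneg_left h2 (Real.exp_pos _).le
        _ = ε ^ ((-2:ℝ)) * ε ^ (-((α * A + Real.log P) / L)) := by rw [h1]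
    calc (hfin.toFinset.card : ℝ) ≤ Real.exp (α * M) * P := hcard
      _ = Real.exp (α * A) * Real.exp (2 * (-Real.log ε)) * P := by rw [hexpM]
      _ ≤ ε ^ (-(2 + (α * A + Real.log P) / L)) := hrpow
  · -- recovery
    intro 𝔅 h𝔅 N D hD y η hη0 hfeas htail chat hchat
    set ut : H := ∑ i ∈ 𝔅, c i • ψ i with hut
    set uh : H := ∑ i : {i // i ∈ 𝔅}, chat i • ψ i.1 with huh
    -- tail bound
    have hTbound : ‖u - ut‖ ^ 2 ≤ ε ^ 2 * E / C ^ 2 := by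
      have hcompl : HasSum (fun x : {x // x ∉ 𝔅} => c x.1 • ψ x.1) (u - ut) := by
        exact (Finset.hasSum_compl_iff (f := fun i => c i • ψ i) 𝔅).2
          (by simpa [hut] using hu)
      have hten : Filter.Tendsto (fun s : Finset {x // x ∉ 𝔅} => ∑ j ∈ s, c j.1 • ψ j.1)
          Filter.atTop (nhds (u - ut)) := hcompl
      have hten2 : Filter.Tendsto (fun s : Finset {x // x ∉ 𝔅} => ‖∑ j ∈ s, c j.1 • ψ j.1‖ ^ 2)
          Filter.atTop (nhds (‖u - ut‖ ^ 2)) := (hten.norm).pow 2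
      have hψc : Orthonormal ℝ (fun x : {x // x ∉ 𝔅} => ψ x.1) :=
        hψ.comp _ Subtype.val_injective
      have hbound : ∀ s : Finset {x // x ∉ 𝔅},
          ‖∑ j ∈ s, c j.1 • ψ j.1‖ ^ 2 ≤ B^2 * Real.exp (-α * M) * P := by
        intro s
        rw [ortho_norm_sq hψc]
        calc ∑ j ∈ s, (c j.1) ^ 2
            ≤ ∑ j ∈ s, B^2 * Real.exp (-α * M) * Real.exp (-α * (weightedOrder j.1 : ℝ)) := by
              apply Finset.sum_le_sum
              intro j _
              have hjn : M < (weightedOrder j.1 : ℝ) := by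
                have h1 : j.1 ∉ hfin.toFinset := fun hmem => j.2 (h𝔅 hmem)
                have h2 : ¬ ((weightedOrder j.1 : ℝ) ≤ M) := fun hle =>
                  h1 (hfin.mem_toFinset.2 hle)
                exact not_le.1 h2
              have hb1 : (c j.1)^2 ≤ (B * Real.exp (-α * (weightedOrder j.1 : ℝ)))^2 := by
                rw [← sq_abs]
                exact pow_le_pow_left₀ (abs_nonneg _) (hcb j.1) 2
              have hb2 : Real.exp (-α * (weightedOrder j.1 : ℝ)) ≤ Real.exp (-α * M) :=
                Real.exp_le_exp.2 (by nlinarith)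
              calc (c j.1)^2 ≤ (B * Real.exp (-α * (weightedOrder j.1 : ℝ)))^2 := hb1
                _ = B^2 * Real.exp (-α * (weightedOrder j.1 : ℝ))
                    * Real.exp (-α * (weightedOrder j.1 : ℝ)) := by ring
                _ ≤ B^2 * Real.exp (-α * M) * Real.exp (-α * (weightedOrder j.1 : ℝ)) := by
                    have := Real.exp_pos (-α * (weightedOrder j.1 : ℝ))
                    nlinarith
          _ = B^2 * Real.exp (-α * M)
              * ∑ j ∈ s, Real.exp (-α * (weightedOrder j.1 : ℝ)) := by rw [Finset.mul_sum]
          _ ≤ B^2 * Real.exp (-α * M) * P := by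
              apply mul_le_mul_of_nonneg_left _ (by positivity)
              have himg := Finset.sum_image (s := s)
                (f := fun i => Real.exp (-α * (weightedOrder i : ℝ)))
                (g := (Subtype.val : {x // x ∉ 𝔅} → (Fin d → ℕ)))
                (fun x _ y _ h => Subtype.val_injective h)
              calc ∑ j ∈ s, Real.exp (-α * (weightedOrder j.1 : ℝ))
                  = ∑ i ∈ s.image Subtype.val, Real.exp (-α * (weightedOrder i : ℝ)) :=
                    himg.symm
                _ ≤ P := box_sum_le hα _
      have hlim : ‖u - ut‖ ^ 2 ≤ B^2 * Real.exp (-α * M) * P :=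
        le_of_tendsto' hten2 hbound
      have hexp : B^2 * Real.exp (-α * M) * P ≤ ε ^ 2 * E / C ^ 2 := by
        have hexpand : Real.exp (-α * M) = Real.exp (-(α * A)) * ε ^ 2 := by
          rw [hMdef]
          have h1 : -α * (A + (2/α) * (-Real.log ε)) = -(α*A) + 2 * Real.log ε := by
            field_simp
            ring
          rw [h1, Real.exp_add]
          congr 1
          rw [show (2:ℝ) * Real.log ε = Real.log ε + Real.log ε by ring, Real.exp_add,
            Real.exp_log hε0]
          ring
        have hAle : Real.log (C^2 * B^2 * P / E) ≤ α * A := by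
          have h1 : (1/α) * Real.log (C^2 * B^2 * P / E) ≤ A := le_max_right _ _
          calc Real.log (C^2 * B^2 * P / E) = α * ((1/α) * Real.log (C^2 * B^2 * P / E)) := by
                field_simp
            _ ≤ α * A := mul_le_mul_of_nonneg_left h1 hα.le
        have hXpos : 0 < C^2 * B^2 * P / E := by positivity
        have hexpA : Real.exp (-(α * A)) ≤ E / (C^2 * B^2 * P) := by
          have h2 : Real.exp (-(α*A)) ≤ Real.exp (-(Real.log (C^2 * B^2 * P / E))) :=
            Real.exp_le_exp.2 (by linarith)
          calc Real.exp (-(α*A)) ≤ Real.exp (-(Real.log (C^2 * B^2 * P / E))) := h2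
            _ = (C^2 * B^2 * P / E)⁻¹ := by
                rw [Real.exp_neg, Real.exp_log hXpos]
            _ = E / (C^2 * B^2 * P) := by
                rw [inv_div]
        calc B^2 * Real.exp (-α * M) * P = B^2 * P * ε^2 * Real.exp (-(α*A)) := by
              rw [hexpand]; ring
          _ ≤ B^2 * P * ε^2 * (E / (C^2 * B^2 * P)) := by
              apply mul_le_mul_of_nonneg_left hexpA (by positivity)
          _ = ε ^ 2 * E / C ^ 2 := by
              field_simp
      linarith
    -- ‖u - ut‖ ≤ ε * ‖u‖ / C
    have hT : ‖u - ut‖ ≤ ε * ‖u‖ / C := by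
      apply le_of_sq_le_sq' (norm_nonneg _) (by positivity)
      calc ‖u - ut‖ ^ 2 ≤ ε ^ 2 * E / C ^ 2 := hTbound
        _ ≤ ε ^ 2 * ‖u‖^2 / C ^ 2 := by gcongr
        _ = (ε * ‖u‖ / C) ^ 2 := by rw [div_pow, mul_pow]
    -- BPDN residual bound
    set v : {i // i ∈ 𝔅} → ℝ := fun i => c i.1 - chat i with hv
    have hl2v : l2norm v ≤ 2 * ‖u - ut‖ / κ0 := by
      have hfeas2 : l2norm (D.mulVec chat - y) ≤ η := hchat.1
      have hDv : D.mulVec v = (D.mulVec (fun i : {i // i ∈ 𝔅} => c i.1) - y)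
          - (D.mulVec chat - y) := by
        have : v = (fun i : {i // i ∈ 𝔅} => c i.1) - chat := rfl
        rw [this, Matrix.mulVec_sub]
        abel
      have hDvle : l2norm (D.mulVec v) ≤ 2 * η := by
        rw [hDv]
        calc l2norm ((D.mulVec (fun i : {i // i ∈ 𝔅} => c i.1) - y) - (D.mulVec chat - y))
            ≤ l2norm (D.mulVec (fun i : {i // i ∈ 𝔅} => c i.1) - y)
              + l2norm (D.mulVec chat - y) := l2norm_sub_le _ _
          _ ≤ 2 * η := by linarith
      have hlow : (1 - t) * (l2norm v) ^ 2 ≤ (l2norm (D.mulVec v)) ^ 2 :=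
        mulVec_sq_lower D hD v
      have hsq : (l2norm v) ^ 2 ≤ (2 * η / κ0) ^ 2 := by
        have h1 : (l2norm (D.mulVec v))^2 ≤ (2*η)^2 := by
          apply pow_le_pow_left₀ (l2norm_nonneg _) hDvle
        have h2 : (2 * η / κ0)^2 = (2*η)^2 / (1 - t) := by
          rw [div_pow, hκ0sq]
        rw [h2, le_div_iff₀ (by linarith)]
        nlinarith
      have h3 : l2norm v ≤ 2 * η / κ0 :=
        le_of_sq_le_sq' (l2norm_nonneg _) (by positivity) hsq
      calc l2norm v ≤ 2 * η / κ0 := h3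
        _ ≤ 2 * ‖u - ut‖ / κ0 := by gcongr
    -- gap between ut and uh
    have hψ𝔅 : Orthonormal ℝ (fun i : {i // i ∈ 𝔅} => ψ i.1) :=
      hψ.comp _ Subtype.val_injective
    have hgap : ‖ut - uh‖ = l2norm v := by
      have h1 : ut = ∑ i : {i // i ∈ 𝔅}, c i.1 • ψ i.1 := by
        rw [hut, ← Finset.sum_coe_sort 𝔅 (fun i => c i • ψ i)]
      have h2 : ut - uh = ∑ i : {i // i ∈ 𝔅}, v i • ψ i.1 := by
        rw [h1, huh, ← Finset.sum_sub_distrib]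
        exact Finset.sum_congr rfl fun i _ => by rw [hv, sub_smul]
      have h3 : ‖ut - uh‖^2 = (l2norm v)^2 := by
        rw [h2, ortho_norm_sq hψ𝔅, l2norm_sq]
      have := le_of_sq_le_sq' (norm_nonneg (ut - uh)) (l2norm_nonneg v) h3.le
      have := le_of_sq_le_sq' (l2norm_nonneg v) (norm_nonneg (ut - uh)) h3.ge
      linarith
    -- final assembly
    have hsplit : ‖u - uh‖ ≤ ‖u - ut‖ + ‖ut - uh‖ := by
      calc ‖u - uh‖ = ‖(u - ut) + (ut - uh)‖ := by abel_nf
        _ ≤ ‖u - ut‖ + ‖ut - uh‖ := norm_add_le _ _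
    have hfinal : ‖u - uh‖ ≤ C * ‖u - ut‖ := by
      rw [hC]
      have : 2 * ‖u - ut‖ / κ0 = (2/κ0) * ‖u - ut‖ := by ring
      calc ‖u - uh‖ ≤ ‖u - ut‖ + ‖ut - uh‖ := hsplit
        _ ≤ ‖u - ut‖ + (2/κ0) * ‖u - ut‖ := by
            rw [hgap] at *
            linarith [hl2v, this]
        _ = (1 + 2/κ0) * ‖u - ut‖ := by ring
    calc ‖u - uh‖ ≤ C * ‖u - ut‖ := hfinal
      _ ≤ C * (ε * ‖u‖ / C) := mul_le_mul_of_nonneg_left hT hCpos.le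
      _ = ε * ‖u‖ := by field_simp
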